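/- Lagrange multiplier characterization (Proposition 1, necessity): suppose P* is feasible, P*_{ij} > 0 for every (i,j) with Q_{ij} > 0, and P* minimizes J over the feasible set. Then there exist vectors μ, ν ∈ ℝⁿ such that P*_{ij} = Q_{ij}·exp(−μ_j X_{ij} − ν_i Y_{ij}) for every (i,j) with Q_{ij} > 0. -/

import Mathlib

/-- The entropic objective `J(P) = ∑_{i,j} P_{ij}(log(P_{ij}/Q_{ij}) − 1)`,
with the convention that a term with `P_{ij} = 0` contributes `0`. -/
noncomputable def entObj {n : ℕ} (Q P : Matrix (Fin n) (Fin n) ℝ) : ℝ :=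
  ∑ i, ∑ j, if P i j = 0 then (0 : ℝ) else P i j * (Real.log (P i j / Q i j) - 1)

/-- Feasibility of a posterior matrix `P` with respect to the prior `Q`, the
directional sign templates `X`, `Y`, and the marginals `p`, `q`. -/
def Feasible {n : ℕ} (Q X Y : Matrix (Fin n) (Fin n) ℝ) (p q : Fin n → ℝ)
    (P : Matrix (Fin n) (Fin n) ℝ) : Prop :=
  (∀ i j, 0 ≤ P i j) ∧ (∀ i j, Q i j = 0 → P i j = 0) ∧
  (∀ j, ∑ i, X i j * P i j = p j) ∧ (∀ i, ∑ j, Y i j * P i j = q i)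

/-- The dual function
`h(μ, ν) = −∑_{i,j} Q_{ij} exp(−μ_j X_{ij} − ν_i Y_{ij}) − ∑_j μ_j p_j − ∑_i ν_i q_i`. -/
noncomputable def dualFun {n : ℕ} (Q X Y : Matrix (Fin n) (Fin n) ℝ) (p q : Fin n → ℝ)
    (μ ν : Fin n → ℝ) : ℝ :=
  -(∑ i, ∑ j, Q i j * Real.exp (-(μ j) * X i j - (ν i) * Y i j))
    - (∑ j, μ j * p j) - (∑ i, ν i * q i)

set_option linter.unnecessarySeqFocus false

lemma lagrange_derivA (a b q : ℝ) (ha : 0 < a) (hq : 0 < q) :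
    HasDerivAt (fun t => (a + t * b) * (Real.log ((a + t * b) / q) - 1))
      (Real.log (a / q) * b) 0 := by
  have h1 : HasDerivAt (fun t : ℝ => a + t * b) b 0 := by
    simpa using ((hasDerivAt_id (0:ℝ)).mul_const b).const_add a
  have h2 : HasDerivAt (fun x : ℝ => x * (Real.log (x / q) - 1)) (Real.log (a / q)) a := by
    have h3 : HasDerivAt (fun x : ℝ => x * Real.log x - x * Real.log q - x)
        (Real.log a + 1 - Real.log q - 1) a := by
      have := ((Real.hasDerivAt_mul_log ha.ne').sub
        ((hasDerivAt_id a).mul_const (Real.log q))).sub (hasDerivAt_id a)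
      exact this.congr_deriv (by ring)
    have heq : (fun x : ℝ => x * (Real.log (x / q) - 1)) =ᶠ[nhds a]
        (fun x : ℝ => x * Real.log x - x * Real.log q - x) := by
      filter_upwards [eventually_gt_nhds ha] with x hx
      rw [Real.log_div hx.ne' hq.ne']; ring
    have h4 := h3.congr_of_eventuallyEq heq
    have : Real.log (a / q) = Real.log a + 1 - Real.log q - 1 := by
      rw [Real.log_div ha.ne' hq.ne']; ring
    rw [this]; exact h4
  have h2' : HasDerivAt (fun x : ℝ => x * (Real.log (x / q) - 1)) (Real.log (a / q))
      ((fun t : ℝ => a + t * b) 0) := by simpa using h2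
  exact h2'.comp 0 h1

lemma lagrange_keyOrth {n : ℕ} (Q X Y : Matrix (Fin n) (Fin n) ℝ)
    (hQ : ∀ i j, 0 ≤ Q i j)
    (p q : Fin n → ℝ) (Pstar : Matrix (Fin n) (Fin n) ℝ)
    (hfeas : Feasible Q X Y p q Pstar)
    (hpos : ∀ i j, 0 < Q i j → 0 < Pstar i j)
    (hmin : ∀ P' : Matrix (Fin n) (Fin n) ℝ, Feasible Q X Y p q P' →
      entObj Q Pstar ≤ entObj Q P')
    (D : Matrix (Fin n) (Fin n) ℝ)
    (hD0 : ∀ i j, Q i j = 0 → D i j = 0)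
    (hDX : ∀ j, ∑ i, X i j * D i j = 0)
    (hDY : ∀ i, ∑ j, Y i j * D i j = 0) :
    ∑ i, ∑ j, (if Q i j = 0 then (0:ℝ) else Real.log (Pstar i j / Q i j) * D i j) = 0 := by
  have hQpos : ∀ i j, Q i j ≠ 0 → 0 < Q i j := fun i j h => lt_of_le_of_ne (hQ i j) (Ne.symm h)
  have hQP : ∀ i j, Q i j = 0 → Pstar i j = 0 := hfeas.2.1
  set φ : ℝ → ℝ := fun t => ∑ i, ∑ j, if Q i j = 0 then (0:ℝ)
    else (Pstar i j + t * D i j) * (Real.log ((Pstar i j + t * D i j) / Q i j) - 1) with hφ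
  have hev : ∀ᶠ t in nhds (0:ℝ), ∀ i j, Q i j ≠ 0 → 0 < Pstar i j + t * D i j := by
    rw [Filter.eventually_all]
    intro i
    rw [Filter.eventually_all]
    intro j
    by_cases h : Q i j = 0
    · filter_upwards with t ht; exact absurd h ht
    · have hp := hpos i j (hQpos i j h)
      have tends : Filter.Tendsto (fun t : ℝ => Pstar i j + t * D i j) (nhds 0)
          (nhds (Pstar i j)) := by
        have : Filter.Tendsto (fun t : ℝ => Pstar i j + t * D i j) (nhds 0)
            (nhds (Pstar i j + 0 * D i j)) :=
          (continuous_const.add (continuous_id.mul continuous_const)).tendsto 0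
        simpa using this
      filter_upwards [tends.eventually (eventually_gt_nhds hp)] with t ht _
      exact ht
  have hfeas' : ∀ᶠ t in nhds (0:ℝ), Feasible Q X Y p q (Pstar + t • D) := by
    filter_upwards [hev] with t ht
    refine ⟨?_, ?_, ?_, ?_⟩
    · intro i j
      simp only [Matrix.add_apply, Matrix.smul_apply, smul_eq_mul]
      by_cases h : Q i j = 0
      · rw [hQP i j h, hD0 i j h]; simp
      · exact (ht i j h).le
    · intro i j h
      simp only [Matrix.add_apply, Matrix.smul_apply, smul_eq_mul]
      rw [hQP i j h, hD0 i j h]; simp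
    · intro j
      simp only [Matrix.add_apply, Matrix.smul_apply, smul_eq_mul, mul_add]
      rw [Finset.sum_add_distrib, hfeas.2.2.1 j]
      have : ∑ i, X i j * (t * D i j) = t * ∑ i, X i j * D i j := by
        rw [Finset.mul_sum]; congr 1; ext i; ring
      rw [this, hDX j]; ring
    · intro i
      simp only [Matrix.add_apply, Matrix.smul_apply, smul_eq_mul, mul_add]
      rw [Finset.sum_add_distrib, hfeas.2.2.2 i]
      have : ∑ j, Y i j * (t * D i j) = t * ∑ j, Y i j * D i j := by
        rw [Finset.mul_sum]; congr 1; ext j; ring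
      rw [this, hDY i]; ring
  have hφeq : ∀ᶠ t in nhds (0:ℝ), φ t = entObj Q (Pstar + t • D) := by
    filter_upwards [hev] with t ht
    unfold entObj
    apply Finset.sum_congr rfl; intro i _
    apply Finset.sum_congr rfl; intro j _
    simp only [Matrix.add_apply, Matrix.smul_apply, smul_eq_mul]
    by_cases h : Q i j = 0
    · rw [if_pos h]; simp [hQP i j h, hD0 i j h]
    · rw [if_neg h]; exact (if_neg (ht i j h).ne').symm
  have hφ0 : φ 0 = entObj Q Pstar := by
    unfold entObj
    apply Finset.sum_congr rfl; intro i _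
    apply Finset.sum_congr rfl; intro j _
    by_cases h : Q i j = 0
    · rw [if_pos h, if_pos (hQP i j h)]
    · rw [if_neg h, if_neg (hpos i j (hQpos i j h)).ne']; simp
  have hlocmin : IsLocalMin φ 0 := by
    filter_upwards [hφeq, hfeas'] with t heq hf
    rw [heq, hφ0]
    exact hmin _ hf
  have hderiv : HasDerivAt φ
      (∑ i, ∑ j, if Q i j = 0 then (0:ℝ) else Real.log (Pstar i j / Q i j) * D i j) 0 := by
    apply HasDerivAt.fun_sum
    intro i _
    apply HasDerivAt.fun_sum
    intro j _
    by_cases h : Q i j = 0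
    · simp only [if_pos h]; exact hasDerivAt_const 0 0
    · simp only [if_neg h]
      exact lagrange_derivA (Pstar i j) (D i j) (Q i j) (hpos i j (hQpos i j h)) (hQpos i j h)
  exact hlocmin.hasDerivAt_eq_zero hderiv

/-- The linear map whose range is spanned by the constraint gradients together
with the coordinate directions off the support of `Q`. -/
noncomputable def lagrangeT {n : ℕ} (Q X Y : Matrix (Fin n) (Fin n) ℝ) :
    ((Fin n → ℝ) × (Fin n → ℝ) × EuclideanSpace ℝ (Fin n × Fin n)) →ₗ[ℝ]
    EuclideanSpace ℝ (Fin n × Fin n) where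
  toFun z := (WithLp.equiv 2 ((Fin n × Fin n) → ℝ)).symm
    (fun ij => if Q ij.1 ij.2 = 0 then z.2.2 ij
      else z.1 ij.2 * X ij.1 ij.2 + z.2.1 ij.1 * Y ij.1 ij.2)
  map_add' a b := by
    ext ij
    simp only [WithLp.equiv_symm_apply, PiLp.toLp_apply, WithLp.ofLp_toLp, Prod.fst_add, Prod.snd_add, PiLp.add_apply,
      Pi.add_apply]
    by_cases h : Q ij.1 ij.2 = 0 <;> simp [h] <;> ring
  map_smul' t a := by
    ext ij
    simp only [WithLp.equiv_symm_apply, PiLp.toLp_apply, WithLp.ofLp_toLp, Prod.smul_fst, Prod.smul_snd, PiLp.smul_apply,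
      Pi.smul_apply, smul_eq_mul, RingHom.id_apply]
    by_cases h : Q ij.1 ij.2 = 0 <;> simp [h] <;> ring

lemma lagrange_span {n : ℕ} (Q X Y : Matrix (Fin n) (Fin n) ℝ)
    (Pstar : Matrix (Fin n) (Fin n) ℝ)
    (key : ∀ D : Matrix (Fin n) (Fin n) ℝ,
      (∀ i j, Q i j = 0 → D i j = 0) → (∀ j, ∑ i, X i j * D i j = 0) →
      (∀ i, ∑ j, Y i j * D i j = 0) →
      ∑ i, ∑ j, (if Q i j = 0 then (0:ℝ) else Real.log (Pstar i j / Q i j) * D i j) = 0) :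
    ∃ μ ν : Fin n → ℝ, ∀ i j, Q i j ≠ 0 →
      Real.log (Pstar i j / Q i j) = -(μ j) * X i j - (ν i) * Y i j := by
  classical
  set c : EuclideanSpace ℝ (Fin n × Fin n) := (WithLp.equiv 2 ((Fin n × Fin n) → ℝ)).symm
    (fun ij => if Q ij.1 ij.2 = 0 then (0:ℝ) else Real.log (Pstar ij.1 ij.2 / Q ij.1 ij.2))
    with hc_def
  set K := LinearMap.range (lagrangeT Q X Y) with hK
  have hcK : c ∈ K := by
    rw [← Submodule.orthogonal_orthogonal K]
    rw [Submodule.mem_orthogonal]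
    intro d hd
    rw [Submodule.mem_orthogonal] at hd
    have d0 : ∀ ij : Fin n × Fin n, Q ij.1 ij.2 = 0 → d ij = 0 := by
      intro ij hij
      have := hd (lagrangeT Q X Y (0, 0, (WithLp.equiv 2 ((Fin n × Fin n) → ℝ)).symm
        (Pi.single ij 1))) ⟨_, rfl⟩
      rw [PiLp.inner_apply] at this
      simp only [lagrangeT, LinearMap.coe_mk, AddHom.coe_mk, WithLp.equiv_symm_apply, PiLp.toLp_apply, WithLp.ofLp_toLp,
        RCLike.inner_apply, conj_trivial, Pi.zero_apply, zero_mul, add_zero, zero_add] at this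
      rw [Finset.sum_eq_single ij] at this
      · simpa [hij] using this
      · intro kl _ hkl
        by_cases h : Q kl.1 kl.2 = 0 <;> simp [h, Pi.single_apply, hkl]
      · simp
    have dX : ∀ j0, ∑ i, X i j0 * d (i, j0) = 0 := by
      intro j0
      have h1 := hd (lagrangeT Q X Y (Pi.single j0 1, 0, 0)) ⟨_, rfl⟩
      rw [PiLp.inner_apply] at h1
      simp only [lagrangeT, LinearMap.coe_mk, AddHom.coe_mk, WithLp.equiv_symm_apply, PiLp.toLp_apply, WithLp.ofLp_toLp,
        RCLike.inner_apply, conj_trivial, Pi.zero_apply, zero_mul, add_zero] at h1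
      rw [Fintype.sum_prod_type] at h1
      rw [← h1]
      apply Finset.sum_congr rfl
      intro i _
      rw [Finset.sum_eq_single j0]
      · by_cases h : Q i j0 = 0
        · simp [h, d0 (i, j0) h]
        · simp [h, mul_comm]
      · intro l _ hl
        by_cases h : Q i l = 0 <;> simp [h, Pi.single_apply, hl]
      · simp
    have dY : ∀ i0, ∑ j, Y i0 j * d (i0, j) = 0 := by
      intro i0
      have h1 := hd (lagrangeT Q X Y (0, Pi.single i0 1, 0)) ⟨_, rfl⟩
      rw [PiLp.inner_apply] at h1
      simp only [lagrangeT, LinearMap.coe_mk, AddHom.coe_mk, WithLp.equiv_symm_apply, PiLp.toLp_apply, WithLp.ofLp_toLp,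
        RCLike.inner_apply, conj_trivial, Pi.zero_apply, zero_mul, zero_add] at h1
      rw [Fintype.sum_prod_type] at h1
      have h2 : ∑ i, ∑ j, (if Q i j = 0 then (0:ℝ)
          else (Pi.single i0 (1:ℝ) : Fin n → ℝ) i * Y i j) * d (i, j)
          = ∑ j, Y i0 j * d (i0, j) := by
        rw [Finset.sum_eq_single i0]
        · apply Finset.sum_congr rfl
          intro j _
          by_cases h : Q i0 j = 0
          · simp [h, d0 (i0, j) h]
          · simp [h]
        · intro k _ hk
          apply Finset.sum_eq_zero
          intro j _
          by_cases h : Q k j = 0 <;> simp [h, Pi.single_apply, hk]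
        · simp
      rw [← h2]
      convert h1 using 2 with x
      apply Finset.sum_congr rfl; intro j _
      exact mul_comm _ _
    have hkey := key (Matrix.of fun i j => d (i, j))
      (fun i j h => d0 (i, j) h)
      (fun j => by simpa using dX j)
      (fun i => by simpa using dY i)
    rw [PiLp.inner_apply]
    simp only [RCLike.inner_apply, conj_trivial, hc_def, WithLp.equiv_symm_apply, PiLp.toLp_apply, WithLp.ofLp_toLp]
    rw [Fintype.sum_prod_type]
    refine Eq.trans ?_ hkey
    apply Finset.sum_congr rfl; intro i _
    apply Finset.sum_congr rfl; intro j _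
    by_cases h : Q i j = 0 <;> simp [h, mul_comm]
  obtain ⟨⟨μ', ν', r⟩, hT⟩ := hcK
  refine ⟨fun j => -μ' j, fun i => -ν' i, fun i j hij => ?_⟩
  have := congrFun (congrArg (WithLp.equiv 2 ((Fin n × Fin n) → ℝ)) hT) (i, j)
  simp only [lagrangeT, LinearMap.coe_mk, AddHom.coe_mk, hc_def,
    Equiv.apply_symm_apply] at this
  rw [if_neg hij, if_neg hij] at this
  show Real.log (Pstar i j / Q i j) = -(-μ' j) * X i j - -ν' i * Y i j
  rw [← this]; ring

/-- Lagrange multiplier characterization (necessity): if `P*` is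
feasible, strictly positive on the support of `Q`, and minimizes `J` over the
feasible set, then there exist `μ, ν ∈ ℝⁿ` with
`P*_{ij} = Q_{ij}·exp(−μ_j X_{ij} − ν_i Y_{ij})` whenever `Q_{ij} > 0`. -/
theorem lagrange_necessity {n : ℕ} (hn : 1 ≤ n) (Q X Y : Matrix (Fin n) (Fin n) ℝ)
    (hQ : ∀ i j, 0 ≤ Q i j)
    (hX : ∀ i j, X i j = -1 ∨ X i j = 0 ∨ X i j = 1)
    (hY : ∀ i j, Y i j = -1 ∨ Y i j = 0 ∨ Y i j = 1)
    (p q : Fin n → ℝ) (Pstar : Matrix (Fin n) (Fin n) ℝ)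
    (hfeas : Feasible Q X Y p q Pstar)
    (hpos : ∀ i j, 0 < Q i j → 0 < Pstar i j)
    (hmin : ∀ P' : Matrix (Fin n) (Fin n) ℝ, Feasible Q X Y p q P' →
      entObj Q Pstar ≤ entObj Q P') :
    ∃ μ ν : Fin n → ℝ, ∀ i j, 0 < Q i j →
      Pstar i j = Q i j * Real.exp (-(μ j) * X i j - (ν i) * Y i j) := by
  obtain ⟨μ, ν, hμν⟩ := lagrange_span Q X Y Pstar
    (fun D hD0 hDX hDY => lagrange_keyOrth Q X Y hQ p q Pstar hfeas hpos hmin D hD0 hDX hDY)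
  refine ⟨μ, ν, fun i j hij => ?_⟩
  have hlog := hμν i j hij.ne'
  have hPpos := hpos i j hij
  rw [← hlog, Real.exp_log (div_pos hPpos hij)]
  field_simp
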